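/- For every real λ > 0 and all integers r, m with 0 ≤ r < m, one has φ(m, λ)/(m+1) < φ(r, λ)/(r+1), i.e. s_m(λ)/((m+1)·s_{m+1}(λ)) < s_r(λ)/((r+1)·s_{r+1}(λ)), where φ(k, λ) = s_k(λ)/s_{k+1}(λ). -/

import Mathlib

/-- The `n`-th partial sum of the Taylor series of the exponential function. -/
noncomputable def s (n : ℕ) (a : ℝ) : ℝ :=
  ∑ j ∈ Finset.range (n + 1), a ^ j / (Nat.factorial j : ℝ)

/-- The ratio of consecutive partial sums of the exponential series. -/
noncomputable def phi (n : ℕ) (a : ℝ) : ℝ := s n a / s (n + 1) a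

open Finset
-- nat lemmas
lemma choose_mono_half (N k m : ℕ) (hk : k ≤ m) (hm : 2 * m ≤ N) :
    N.choose k ≤ N.choose m := by
  induction m with
  | zero => interval_cases k; rfl
  | succ m ih =>
    rcases Nat.eq_or_lt_of_le hk with h | h
    · subst h; rfl
    · have h1 : k ≤ m := Nat.lt_succ_iff.mp h
      have h2 : 2 * m ≤ N := by omega
      have h3 : m < N / 2 := by omega
      exact (ih h1 h2).trans (Nat.choose_le_succ_of_lt_half_left h3)

lemma fact_mul_fact_le (k i n : ℕ) (hk : k ≤ i) (hi : i ≤ n) :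
    Nat.factorial i * Nat.factorial (n + 1 + k - i) ≤ Nat.factorial (n+1) * Nat.factorial k := by
  set N := n + 1 + k with hN
  set j := N - i with hj
  have hiN : i ≤ N := by omega
  have hkj : k + 1 ≤ j := by omega
  have hij : i + j = N := by omega
  have hmin : N.choose k ≤ N.choose i := by
    rcases le_total i j with h | h
    · exact choose_mono_half N k i hk (by omega)
    · have : N.choose k ≤ N.choose j := choose_mono_half N k j (by omega) (by omega)
      calc N.choose k ≤ N.choose j := this
        _ = N.choose i := by rw [hj, Nat.choose_symm hiN]
  have e1 : N.choose i * i.factorial * j.factorial = N.factorial :=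
    Nat.choose_mul_factorial_mul_factorial hiN
  have e2 : N.choose k * k.factorial * (n+1).factorial = N.factorial := by
    have := Nat.choose_mul_factorial_mul_factorial (show k ≤ N by omega)
    simpa [show N - k = n + 1 by omega] using this
  have hpos : 0 < N.choose i := Nat.choose_pos hiN
  have : i.factorial * j.factorial * N.choose i ≤ (n+1).factorial * k.factorial * N.choose i := by
    calc i.factorial * j.factorial * N.choose i = N.factorial := by linarith [e1]
      _ = N.choose k * k.factorial * (n+1).factorial := e2.symm
      _ ≤ N.choose i * k.factorial * (n+1).factorial := by
          exact Nat.mul_le_mul_right _ (Nat.mul_le_mul_right _ hmin)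
      _ = (n+1).factorial * k.factorial * N.choose i := by ring
  exact Nat.le_of_mul_le_mul_right this hpos


lemma key (a : ℝ) (ha : 0 < a) (n : ℕ) :
    ∑ k ∈ range (n+1), ((n+1-k : ℕ) : ℝ) * (a^(n+1+k) / ((n+1).factorial * k.factorial)) <
      s n a * s (n+1) a := by
  set g : ℕ × ℕ → ℝ := fun p => a ^ (p.1 + p.2) / (p.1.factorial * p.2.factorial) with hg
  have hrhs : s n a * s (n+1) a = ∑ p ∈ range (n+1) ×ˢ range (n+2), g p := by
    rw [s, s, Finset.sum_mul_sum, Finset.sum_product]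
    refine Finset.sum_congr rfl fun i _ => Finset.sum_congr rfl fun j _ => ?_
    rw [hg]; simp only [pow_add]; rw [div_mul_div_comm]
  set T : Finset ((_ : ℕ) × ℕ) := (range (n+1)).sigma (fun k => Icc k n) with hT
  set e : ((_ : ℕ) × ℕ) → ℕ × ℕ := fun σ => (σ.2, n + 1 + σ.1 - σ.2) with he
  have hlhs : ∑ k ∈ range (n+1), ((n+1-k : ℕ) : ℝ) * (a^(n+1+k) / ((n+1).factorial * k.factorial))
      = ∑ σ ∈ T, a^(n+1+σ.1) / (((n+1).factorial : ℝ) * σ.1.factorial) := by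
    rw [hT, Finset.sum_sigma]
    refine Finset.sum_congr rfl fun k _ => ?_
    simp only [Finset.sum_const, Nat.card_Icc, nsmul_eq_mul]
  rw [hlhs, hrhs]
  have hinj : Set.InjOn e T := by
    rintro ⟨pk, pi⟩ hp ⟨qk, qi⟩ hq hpq
    simp only [hT, Finset.mem_coe, Finset.mem_sigma, Finset.mem_range, Finset.mem_Icc] at hp hq
    simp only [he, Prod.mk.injEq] at hpq
    obtain ⟨h1, h2⟩ := hpq
    have hfst : pk = qk := by omega
    subst hfst h1
    rfl
  have step1 : ∑ σ ∈ T, a^(n+1+σ.1) / (((n+1).factorial : ℝ) * σ.1.factorial)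
      ≤ ∑ σ ∈ T, g (e σ) := by
    refine Finset.sum_le_sum fun σ hσ => ?_
    simp only [hT, Finset.mem_sigma, Finset.mem_range, Finset.mem_Icc] at hσ
    obtain ⟨hk, hki, hin⟩ := hσ
    have hexp : σ.2 + (n + 1 + σ.1 - σ.2) = n + 1 + σ.1 := by omega
    rw [hg, he]
    simp only
    rw [hexp]
    have hfac : (σ.2.factorial * (n + 1 + σ.1 - σ.2).factorial : ℝ)
        ≤ ((n+1).factorial * σ.1.factorial : ℝ) := by
      exact_mod_cast fact_mul_fact_le σ.1 σ.2 n hki hin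
    gcongr
  have step2 : ∑ σ ∈ T, g (e σ) = ∑ q ∈ T.image e, g q :=
    (Finset.sum_image (fun p hp q hq h => hinj hp hq h)).symm
  have hsub : T.image e ⊆ (range (n+1) ×ˢ range (n+2)).erase (0, 0) := by
    intro q hq
    obtain ⟨σ, hσ, rfl⟩ := Finset.mem_image.mp hq
    simp only [hT, Finset.mem_sigma, Finset.mem_range, Finset.mem_Icc] at hσ
    simp only [he, Finset.mem_erase, Finset.mem_product, Finset.mem_range, Prod.mk.injEq,
      ne_eq, not_and]
    omega
  have step3 : ∑ q ∈ T.image e, g q ≤ ∑ q ∈ (range (n+1) ×ˢ range (n+2)).erase (0,0), g q := by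
    refine Finset.sum_le_sum_of_subset_of_nonneg hsub fun q _ _ => ?_
    rw [hg]; positivity
  have hmem : ((0:ℕ), (0:ℕ)) ∈ range (n+1) ×ˢ range (n+2) := by
    simp
  have step4 : ∑ q ∈ (range (n+1) ×ˢ range (n+2)).erase (0,0), g q
      < ∑ p ∈ range (n+1) ×ˢ range (n+2), g p := by
    rw [← Finset.add_sum_erase _ g hmem]
    have : g (0,0) = 1 := by simp [hg]
    linarith
  linarith

lemma s_pos (a : ℝ) (ha : 0 < a) (n : ℕ) : 0 < s n a := by
  apply Finset.sum_pos
  · intro j _; positivity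
  · exact ⟨0, Finset.mem_range.mpr (Nat.succ_pos n)⟩

lemma s_succ (a : ℝ) (n : ℕ) : s (n+1) a = s n a + a^(n+1) / ((n+1).factorial : ℝ) := by
  simp [s, Finset.sum_range_succ]

lemma sumL (a : ℝ) (n : ℕ) :
    ∑ k ∈ range (n+1), (k : ℝ) * (a^k / k.factorial) = a * s n a - a * a^n / n.factorial := by
  induction n with
  | zero => simp [s]
  | succ n ih =>
    rw [Finset.sum_range_succ, ih, s_succ]
    have h1 : ((n+1).factorial : ℝ) = (n+1) * n.factorial := by
      push_cast [Nat.factorial_succ]; ring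
    have h2 : (n.factorial : ℝ) ≠ 0 := by positivity
    rw [h1]
    field_simp
    push_cast
    ring

lemma step (a : ℝ) (ha : 0 < a) (n : ℕ) :
    s (n+1) a / (s (n+2) a * (n+2)) < s n a / (s (n+1) a * (n+1)) := by
  set x := s n a with hx
  set t := a^(n+1) / ((n+1).factorial : ℝ) with ht
  set u := a^(n+2) / ((n+2).factorial : ℝ) with hu
  have hs1 : s (n+1) a = x + t := by rw [s_succ, hx, ht]
  have hs2 : s (n+2) a = x + t + u := by rw [s_succ, hs1, hu]
  have hfac1 : ((n+1).factorial : ℝ) = (n+1) * n.factorial := by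
    push_cast [Nat.factorial_succ]; ring
  have hfac2 : ((n+2).factorial : ℝ) = (n+2) * (n+1).factorial := by
    push_cast [Nat.factorial_succ]; ring
  have hfn : (n.factorial : ℝ) ≠ 0 := by positivity
  have hfn1 : ((n+1).factorial : ℝ) ≠ 0 := by positivity
  have hut : ((n:ℝ)+2) * u = a * t := by
    rw [hu, ht, hfac2]; field_simp; ring
  have hat : a * a^n / (n.factorial : ℝ) = ((n:ℝ)+1) * t := by
    rw [ht, hfac1]; field_simp; ring
  -- W identity
  have hW : ∑ k ∈ range (n+1), ((n+1-k : ℕ) : ℝ) * (a^k / k.factorial)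
      = ((n:ℝ)+1) * x - (a * x - ((n:ℝ)+1) * t) := by
    have : ∀ k ∈ range (n+1), ((n+1-k : ℕ) : ℝ) * (a^k / k.factorial)
        = ((n:ℝ)+1) * (a^k / k.factorial) - (k:ℝ) * (a^k / k.factorial) := by
      intro k hk
      rw [Finset.mem_range] at hk
      have : ((n+1-k : ℕ) : ℝ) = ((n:ℝ)+1) - k := by
        have : k ≤ n + 1 := by omega
        push_cast [Nat.cast_sub this]; ring
      rw [this]; ring
    rw [Finset.sum_congr rfl this, Finset.sum_sub_distrib, ← Finset.mul_sum, sumL, hat, ← s, ← hx]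
  -- key inequality in t * W form
  have hkey := key a ha n
  have hkey' : t * (((n:ℝ)+1) * x - (a * x - ((n:ℝ)+1) * t)) < x * (x + t) := by
    rw [← hW, ← hs1, hx, Finset.mul_sum]
    calc ∑ k ∈ range (n+1), t * (((n+1-k : ℕ) : ℝ) * (a^k / k.factorial))
        = ∑ k ∈ range (n+1), ((n+1-k : ℕ) : ℝ) * (a^(n+1+k) / ((n+1).factorial * k.factorial)) := by
          refine Finset.sum_congr rfl fun k hk => ?_
          rw [ht, pow_add]
          have hfk : (k.factorial : ℝ) ≠ 0 := by positivity
          field_simp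
          ring
      _ < s n a * s (n+1) a := hkey
  -- E identity and conclusion
  have hE : ((n:ℝ)+2) * x * (x + t + u) - ((n:ℝ)+1) * (x + t)^2
      = x * (x + t) - t * (((n:ℝ)+1) * x - (a * x - ((n:ℝ)+1) * t)) := by
    linear_combination x * hut
  have hxpos : 0 < x := s_pos a ha n
  have htpos : 0 < t := by rw [ht]; positivity
  have hupos : 0 < u := by rw [hu]; positivity
  rw [hs1, hs2, div_lt_div_iff₀ (by positivity) (by positivity)]
  nlinarith [hkey', hE]

theorem stmt_8' (a : ℝ) (ha : 0 < a) (r m : ℕ) (hrm : r < m) :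
    (s m a / s (m+1) a) / (m + 1 : ℝ) < (s r a / s (r+1) a) / (r + 1 : ℝ) := by
  have hanti : StrictAnti (fun n : ℕ => (s n a / s (n+1) a) / ((n:ℝ) + 1)) := by
    apply strictAnti_nat_of_succ_lt
    intro n
    have h := step a ha n
    have h1 : 0 < s (n+1) a := s_pos a ha (n+1)
    have h2 : 0 < s (n+2) a := s_pos a ha (n+2)
    show (s (n+1) a / s (n+1+1) a) / (((n+1:ℕ):ℝ) + 1) < (s n a / s (n+1) a) / ((n:ℝ) + 1)
    push_cast
    rw [div_div, div_div]
    convert h using 3 <;> push_cast <;> ring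
  exact hanti hrm


theorem stmt_8 (a : ℝ) (ha : 0 < a) (r m : ℕ) (hrm : r < m) :
    phi m a / (m + 1 : ℝ) < phi r a / (r + 1 : ℝ) := by
  simpa [phi] using stmt_8' a ha r m hrm
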